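/- Suppose ω ∈ ℝ^n and k ∈ ℝ_{>0}^n satisfy IC1, IC2, IC3, and additionally IC4: k_1 ≥ k_2 ≥ ⋯ ≥ k_n. Let σ ∈ {−1,+1}^n and let μ, ν be indices with μ < ν, σ_μ = +1, and σ_ν = −1. Let σ' be the same as σ except that σ'_μ = −1 and σ'_ν = +1. If f_σ has no positive roots, then f_{σ'} also has no positive roots. -/
import Mathlib
set_option maxHeartbeats 1000000

/-- The function `f_σ(R) = -R + (1/n) ∑ μ, σ μ √(k μ² R - ω μ²)`. -/
noncomputable def fSigma (n : ℕ) (ω k σ : Fin n → ℝ) (R : ℝ) : ℝ :=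
  -R + (1 / (n : ℝ)) * ∑ μ, σ μ * Real.sqrt ((k μ) ^ 2 * R - (ω μ) ^ 2)

/-- `R` is a positive root of `f_σ`. -/
def IsPosRoot (n : ℕ) (ω k σ : Fin n → ℝ) (R : ℝ) : Prop :=
  0 < R ∧ (∀ μ, (ω μ) ^ 2 ≤ (k μ) ^ 2 * R) ∧ fSigma n ω k σ R = 0

/-- Lemma 2.6: under IC1–IC4 (IC4: `k` nonincreasing), suppose `μ < ν`,
`σ μ = +1` and `σ ν = -1`, and `σ'` is `σ` with the entries at `μ` and `ν` swapped.
If `f_σ` has no positive roots, then `f_{σ'}` has no positive roots either. -/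
theorem no_posRoot_of_swap_of_antitone (n : ℕ) (hn : 2 ≤ n) (ω k σ : Fin n → ℝ)
    (hIC1 : ∑ μ, ω μ = 0) (hIC2 : ω ≠ 0)
    (hIC3pos : ∀ μ, 0 < k μ)
    (hIC3ord : ∀ μ ν : Fin n, μ ≤ ν → |ω μ / k μ| ≤ |ω ν / k ν|)
    (hIC4 : ∀ μ ν : Fin n, μ ≤ ν → k ν ≤ k μ)
    (hσ : ∀ μ, σ μ = -1 ∨ σ μ = 1)
    (μ ν : Fin n) (hμν : μ < ν) (hμ : σ μ = 1) (hν : σ ν = -1)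
    (σ' : Fin n → ℝ) (hσ'μ : σ' μ = -1) (hσ'ν : σ' ν = 1)
    (hσ'rest : ∀ ι, ι ≠ μ → ι ≠ ν → σ' ι = σ ι)
    (hno : ¬ ∃ R : ℝ, IsPosRoot n ω k σ R) :
    ¬ ∃ R : ℝ, IsPosRoot n ω k σ' R := by
  rintro ⟨R, hRpos, hdom, hroot⟩
  apply hno
  have hnpos : (0:ℝ) < n := by
    have : (2:ℝ) ≤ n := by exact_mod_cast hn
    linarith
  set s : Fin n → ℝ := fun ι => Real.sqrt ((k ι)^2 * R - (ω ι)^2) with hs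
  have hkμ := hIC3pos μ
  have hkν := hIC3pos ν
  -- key sqrt inequality
  have h3 := hIC3ord μ ν hμν.le
  have h4 : (ω μ / k μ)^2 ≤ (ω ν / k ν)^2 := by
    rw [← sq_abs (ω μ / k μ), ← sq_abs (ω ν / k ν)]
    exact pow_le_pow_left₀ (abs_nonneg _) h3 2
  have h3' : (ω μ)^2 * (k ν)^2 ≤ (ω ν)^2 * (k μ)^2 := by
    rw [div_pow, div_pow, div_le_div_iff₀ (by positivity) (by positivity)] at h4
    linarith
  have hk := hIC4 μ ν hμν.le
  have hsle : s ν ≤ s μ := by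
    apply Real.sqrt_le_sqrt
    have hdν := hdom ν
    nlinarith [mul_nonneg (mul_nonneg (sub_nonneg.2 hk) (by linarith : (0:ℝ) ≤ k μ + k ν))
      (sub_nonneg.2 hdν), sq_nonneg (k ν), mul_pos hkν hkν]
  -- f_σ(R) ≥ 0
  have key : ∑ ι, (σ ι - σ' ι) * s ι = 2 * s μ - 2 * s ν := by
    rw [← Finset.sum_subset (Finset.subset_univ ({μ, ν} : Finset (Fin n)))]
    · rw [Finset.sum_pair hμν.ne, hμ, hν, hσ'μ, hσ'ν]; ring
    · intro ι _ hι
      simp only [Finset.mem_insert, Finset.mem_singleton, not_or] at hι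
      rw [hσ'rest ι hι.1 hι.2]; ring
  have hsum : ∑ ι, σ' ι * s ι ≤ ∑ ι, σ ι * s ι := by
    have : 0 ≤ ∑ ι, (σ ι * s ι - σ' ι * s ι) := by
      simp_rw [← sub_mul]
      rw [key]
      have : 0 ≤ s ν := Real.sqrt_nonneg _
      linarith
    rw [Finset.sum_sub_distrib] at this
    linarith
  have hge : 0 ≤ fSigma n ω k σ R := by
    rw [← hroot]
    unfold fSigma
    have hc : (0:ℝ) ≤ 1 / (n:ℝ) := by positivity
    have := mul_le_mul_of_nonneg_left hsum hc
    simp only [hs] at this ⊢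
    linarith
  -- find R₂ with f_σ(R₂) < 0
  set C : ℝ := (1 / (n:ℝ)) * ∑ ι, k ι with hC
  have hCpos : 0 < C := by
    apply mul_pos (by positivity)
    exact Finset.sum_pos (fun ι _ => hIC3pos ι) ⟨μ, Finset.mem_univ μ⟩
  set R₂ : ℝ := max R (C^2) + 1 with hR₂
  have hRR₂ : R ≤ R₂ := le_trans (le_max_left _ _) (by linarith)
  have hR₂pos : 0 < R₂ := lt_of_lt_of_le hRpos hRR₂
  have hCsq : C^2 < R₂ := lt_of_le_of_lt (le_max_right _ _) (by linarith)
  have hCsqrt : C < Real.sqrt R₂ := by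
    rw [show C = Real.sqrt (C^2) by rw [Real.sqrt_sq hCpos.le]]
    exact Real.sqrt_lt_sqrt (by positivity) hCsq
  have hneg : fSigma n ω k σ R₂ < 0 := by
    unfold fSigma
    have hterm : ∀ ι : Fin n, σ ι * Real.sqrt ((k ι)^2 * R₂ - (ω ι)^2) ≤ k ι * Real.sqrt R₂ := by
      intro ι
      have h1 : σ ι * Real.sqrt ((k ι)^2 * R₂ - (ω ι)^2) ≤ Real.sqrt ((k ι)^2 * R₂ - (ω ι)^2) := by
        have : σ ι ≤ 1 := by rcases hσ ι with h | h <;> rw [h] <;> norm_num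
        nlinarith [Real.sqrt_nonneg ((k ι)^2 * R₂ - (ω ι)^2)]
      have h2 : Real.sqrt ((k ι)^2 * R₂ - (ω ι)^2) ≤ Real.sqrt ((k ι)^2 * R₂) :=
        Real.sqrt_le_sqrt (by nlinarith [sq_nonneg (ω ι)])
      have h3 : Real.sqrt ((k ι)^2 * R₂) = k ι * Real.sqrt R₂ := by
        rw [Real.sqrt_mul (sq_nonneg _), Real.sqrt_sq (hIC3pos ι).le]
      linarith
    have hsum2 : ∑ ι, σ ι * Real.sqrt ((k ι)^2 * R₂ - (ω ι)^2) ≤ (∑ ι, k ι) * Real.sqrt R₂ := by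
      rw [Finset.sum_mul]
      exact Finset.sum_le_sum fun ι _ => hterm ι
    have hfinal : (1 / (n:ℝ)) * ((∑ ι, k ι) * Real.sqrt R₂) = C * Real.sqrt R₂ := by
      rw [hC]; ring
    have hlt : C * Real.sqrt R₂ < R₂ := by
      have hsq : Real.sqrt R₂ * Real.sqrt R₂ = R₂ := Real.mul_self_sqrt hR₂pos.le
      have hspos : 0 < Real.sqrt R₂ := Real.sqrt_pos.2 hR₂pos
      calc C * Real.sqrt R₂ < Real.sqrt R₂ * Real.sqrt R₂ :=
            mul_lt_mul_of_pos_right hCsqrt hspos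
        _ = R₂ := hsq
    have hc : (0:ℝ) ≤ 1 / (n:ℝ) := by positivity
    have h5 := mul_le_mul_of_nonneg_left hsum2 hc
    rw [hfinal] at h5
    linarith
  -- continuity + IVT
  have hcont : ContinuousOn (fSigma n ω k σ) (Set.Icc R R₂) := by
    apply Continuous.continuousOn
    unfold fSigma
    apply Continuous.add continuous_neg
    apply Continuous.mul continuous_const
    apply continuous_finset_sum
    intro ι _
    exact continuous_const.mul (Real.continuous_sqrt.comp (by continuity))
  have hIcc : (0:ℝ) ∈ Set.Icc (fSigma n ω k σ R₂) (fSigma n ω k σ R) := ⟨hneg.le, hge⟩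
  obtain ⟨R', hR'mem, hR'root⟩ := intermediate_value_Icc' hRR₂ hcont hIcc
  exact ⟨R', lt_of_lt_of_le hRpos hR'mem.1,
    fun ι => le_trans (hdom ι) (mul_le_mul_of_nonneg_left hR'mem.1 (sq_nonneg _)), hR'root⟩
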